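/- Let δ ∈ (0,1), suppose all payoffs f_i take values in [0,1], for each player i let D_i^δ be a Martin function for the minmax value, and let σ* be a strategy profile such that σ*(h) is a Nash equilibrium of the one-shot game G_O(D^δ,h) for every history h. Then for every initial state there exist a stage n* and a history h* in stage n* such that, setting c_i := E_{h*,σ*}[f_i] for each i ∈ I, the set of runs r ∈ C(h*) satisfying, for every player i, both |f_i(r) − c_i| ≤ δ and v̄_i(r^k) ≤ c_i + 2δ for all k ≥ n*, has P_{h*,σ*}-probability greater than 1 − δ. -/

import Mathlib

open scoped ENNReal NNReal Classical

/-- A multiplayer stochastic game: a nonempty finite set of players `I`, a nonempty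
countable set of states `S`, nonempty finite action sets `A i`, a transition function
`trans` and bounded Borel payoff functions `payoff i` on runs. -/
structure StochGame where
  I : Type
  S : Type
  A : I → Type
  [fintypeI : Fintype I]
  [nonemptyI : Nonempty I]
  [countableS : Countable S]
  [nonemptyS : Nonempty S]
  [fintypeA : ∀ i, Fintype (A i)]
  [nonemptyA : ∀ i, Nonempty (A i)]
  trans : S → (∀ i, A i) → PMF S
  payoff : I → S × (ℕ → (∀ i, A i) × S) → ℝ

open MeasureTheory

attribute [instance] StochGame.fintypeI StochGame.nonemptyI StochGame.countableS
  StochGame.nonemptyS StochGame.fintypeA StochGame.nonemptyA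

namespace StochGame

variable (G : StochGame)

noncomputable instance : DecidableEq G.I := Classical.decEq _

noncomputable instance (i : G.I) : DecidableEq (G.A i) := Classical.decEq _

/-- Action profiles. -/
abbrev ActionProfile := ∀ i, G.A i

/-- Runs `(s¹,a¹,s²,a²,…)`, encoded as an initial state together with a sequence of
(action profile, next state) pairs. -/
abbrev Run := G.S × (ℕ → G.ActionProfile × G.S)

/-- Histories `(s¹,a¹,…,s^n)`, encoded as an initial state together with a finite list of
(action profile, next state) pairs. -/
abbrev History := G.S × List (G.ActionProfile × G.S)

instance : MeasurableSpace G.S := ⊤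
instance : MeasurableSpace G.ActionProfile := ⊤

variable {G}

/-- The final state `s_h` of a history. -/
def lastState (h : G.History) : G.S := h.2.getLast?.elim h.1 Prod.snd

/-- The stage (length) of a history: a history `(s¹,a¹,…,s^n)` is in stage `n`. -/
def stage (h : G.History) : ℕ := h.2.length + 1

/-- The history obtained by appending one action profile and one state. -/
def snocH (h : G.History) (a : G.ActionProfile) (s : G.S) : G.History :=
  (h.1, h.2 ++ [(a, s)])

/-- The history obtained by appending a finite list of (action profile, state) pairs. -/
def catH (h : G.History) (l : List (G.ActionProfile × G.S)) : G.History := (h.1, h.2 ++ l)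

/-- The history in stage 1 consisting of the initial state `s` only. -/
def initH (G : StochGame) (s : G.S) : G.History := (s, [])

/-- All transitions along the list have positive probability when starting from `s`. -/
def ValidFrom (G : StochGame) : G.S → List (G.ActionProfile × G.S) → Prop
  | _, [] => True
  | s, (a, t) :: l => G.trans s a t ≠ 0 ∧ ValidFrom G t l

/-- A history belongs to the set `H` of histories of the game iff all its transitions have
positive probability. -/
def Valid (h : G.History) : Prop := ValidFrom G h.1 h.2

/-- `Ext h h'` means that the history `h'` extends the history `h` (possibly `h = h'`),
written `h ⪯ h'` in the paper. -/
def Ext (h h' : G.History) : Prop := h.1 = h'.1 ∧ h.2 <+: h'.2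

/-- A behavior strategy of player `i`: a mixed action at every history. -/
abbrev Strategy (G : StochGame) (i : G.I) := G.History → PMF (G.A i)

/-- A strategy profile: one behavior strategy for each player. -/
abbrev Profile (G : StochGame) := ∀ i, G.Strategy i

/-- The probability, under the strategy profile `σ`, that after the history `h` play continues
exactly along the finite continuation `l`. -/
noncomputable def contProb (σ : G.Profile) : G.History → List (G.ActionProfile × G.S) → ℝ≥0∞
  | _, [] => 1
  | h, (a, s) :: l =>
      (∏ i, σ i h (a i)) * G.trans (lastState h) a s * contProb σ (snocH h a s) l

/-- The cylinder set `C(h)` of all runs extending the history `h`. -/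
def cyl (h : G.History) : Set G.Run :=
  {r | r.1 = h.1 ∧ ∀ k, (hk : k < h.2.length) → r.2 k = h.2.get ⟨k, hk⟩}

/-- `P` is the family of probability measures `P_{h,σ}` on runs induced, via the
Ionescu-Tulcea/Kolmogorov extension, by a history `h` and a strategy profile `σ`:
each `P h σ` is a probability measure, and the measure of the cylinder set of any finite
extension of `h` is the product of the transition probabilities prescribed by `σ` and `p`.
(These properties determine `P h σ` uniquely, since `P h σ (cyl h) = 1`.) -/
def IsInducedFamily (G : StochGame) (P : G.History → G.Profile → Measure G.Run) : Prop :=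
  (∀ h σ, IsProbabilityMeasure (P h σ)) ∧
    ∀ (h : G.History) (σ : G.Profile) (l : List (G.ActionProfile × G.S)),
      P h σ (cyl (catH h l)) = contProb σ h l

/-- The expected payoff `E_{h,σ}[f_i]` of player `i` in the subgame at `h` under `σ`. -/
noncomputable def expPay (P : G.History → G.Profile → Measure G.Run) (h : G.History)
    (σ : G.Profile) (i : G.I) : ℝ :=
  ∫ r, G.payoff i r ∂(P h σ)

/-- The minmax value `v̄_i(h)` of player `i` at the history `h`. -/
noncomputable def minmaxVal (P : G.History → G.Profile → Measure G.Run) (i : G.I)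
    (h : G.History) : ℝ :=
  ⨅ σ : G.Profile, ⨆ τ : G.Strategy i, expPay P h (Function.update σ i τ) i

/-- The maxmin value `v̲_i(h)` of player `i` at the history `h`. -/
noncomputable def maxminVal (P : G.History → G.Profile → Measure G.Run) (i : G.I)
    (h : G.History) : ℝ :=
  ⨆ τ : G.Strategy i, ⨅ σ : G.Profile, expPay P h (Function.update σ i τ) i

/-- `E[D | h, x]`: the expected value of `D` at the next history, when at history `h` the
players use the mixed action profile `x` and the next state is drawn according to `p`. -/
noncomputable def oneShotExp (D : G.History → ℝ) (h : G.History) (x : ∀ i, PMF (G.A i)) : ℝ :=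
  ∑ a : G.ActionProfile, (∏ i, (x i (a i)).toReal) *
    ∑' s : G.S, (G.trans (lastState h) a s).toReal * D (snocH h a s)

/-- The minmax value `v̄_{O,i}(D,h)` of player `i` in the one-shot game `G_O(D,h)`. -/
noncomputable def oneShotMinmax (D : G.History → ℝ) (i : G.I) (h : G.History) : ℝ :=
  ⨅ x : ∀ j, PMF (G.A j), ⨆ y : PMF (G.A i), oneShotExp D h (Function.update x i y)

/-- The maxmin value `v̲_{O,i}(D,h)` of player `i` in the one-shot game `G_O(D,h)`. -/
noncomputable def oneShotMaxmin (D : G.History → ℝ) (i : G.I) (h : G.History) : ℝ :=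
  ⨆ y : PMF (G.A i), ⨅ x : ∀ j, PMF (G.A j), oneShotExp D h (Function.update x i y)

end StochGame

namespace StochGame

variable {G : StochGame}

/-- `D` is a Martin function with parameter `ε` for player `i` (for the minmax value):
it is bounded; `v̄_i(h) - ε ≤ D h ≤ v̄_i(h)` at every history; `D h ≤ v̄_{O,i}(D,h)` at
every history; and every strategy profile that plays well locally in all the one-shot
games from some history `h'` onwards also plays well globally from `h'` onwards. -/
def IsMartinMinmax (P : G.History → G.Profile → Measure G.Run) (ε : ℝ) (i : G.I)
    (D : G.History → ℝ) : Prop :=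
  (∃ C : ℝ, ∀ h : G.History, |D h| ≤ C) ∧
  (∀ h : G.History, Valid h → minmaxVal P i h - ε ≤ D h ∧ D h ≤ minmaxVal P i h) ∧
  (∀ h : G.History, Valid h → D h ≤ oneShotMinmax D i h) ∧
  (∀ h' : G.History, Valid h' → ∀ σ : G.Profile,
    (∀ h : G.History, Valid h → Ext h' h →
      oneShotMinmax D i h ≤ oneShotExp D h (fun j => σ j h)) →
    (∀ h : G.History, Valid h → Ext h' h →
      oneShotMinmax D i h ≤ expPay P h σ i))

/-- The mixed action profile `x` is a Nash equilibrium of the one-shot game `G_O(D,h)`: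
no player `i` can increase `E[D_i | h, ·]` by unilaterally changing her mixed action. -/
def OneShotNash (D : G.I → G.History → ℝ) (h : G.History) (x : ∀ i, PMF (G.A i)) : Prop :=
  ∀ (i : G.I) (y : PMF (G.A i)),
    oneShotExp (D i) h (Function.update x i y) ≤ oneShotExp (D i) h x

end StochGame

namespace StochGame

variable {G : StochGame}

/-- The prefix `r^k` of a run `r` in stage `k`: the history `(s¹,a¹,…,s^k)`. -/
def prefixRun (r : G.Run) (k : ℕ) : G.History :=
  (r.1, List.ofFn fun j : Fin (k - 1) => r.2 j)

/-- The σ-algebra `𝓕^n` on runs generated by the cylinder sets of histories in stage `n`,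
i.e. by the prefix in stage `n`. -/
def filt (G : StochGame) (n : ℕ) : MeasurableSpace G.Run :=
  MeasurableSpace.comap (fun r : G.Run => prefixRun r n) ⊤

end StochGame

namespace StochGame

variable {G : StochGame}

lemma catH_nil (h : G.History) : catH h [] = h := by simp [catH]

lemma catH_cons (h : G.History) (a : G.ActionProfile) (s : G.S)
    (l : List (G.ActionProfile × G.S)) : catH h ((a, s) :: l) = catH (snocH h a s) l := by
  simp [catH, snocH]

lemma catH_assoc (h : G.History) (l₁ l₂ : List (G.ActionProfile × G.S)) :
    catH h (l₁ ++ l₂) = catH (catH h l₁) l₂ := by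
  simp [catH]

lemma lastState_initH (s : G.S) : lastState (G.initH s) = s := rfl

lemma lastState_snocH (h : G.History) (a : G.ActionProfile) (s : G.S) :
    lastState (snocH h a s) = s := by
  simp [lastState, snocH]

lemma contProb_nil (σ : G.Profile) (h : G.History) : contProb σ h [] = 1 := rfl

lemma contProb_cons (σ : G.Profile) (h : G.History) (a : G.ActionProfile) (s : G.S)
    (l : List (G.ActionProfile × G.S)) :
    contProb σ h ((a, s) :: l) =
      (∏ i, σ i h (a i)) * G.trans (lastState h) a s * contProb σ (snocH h a s) l := rfl

lemma contProb_append (σ : G.Profile) (h : G.History) (l₁ l₂ : List (G.ActionProfile × G.S)) :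
    contProb σ h (l₁ ++ l₂) = contProb σ h l₁ * contProb σ (catH h l₁) l₂ := by
  induction l₁ generalizing h with
  | nil => simp [contProb_nil, catH_nil]
  | cons p l₁ ih =>
      obtain ⟨a, s⟩ := p
      rw [List.cons_append, contProb_cons, contProb_cons, ih, catH_cons]
      ring

lemma contProb_eq_zero (σ : G.Profile) (h : G.History) (l : List (G.ActionProfile × G.S))
    (hl : ¬ ValidFrom G (lastState h) l) : contProb σ h l = 0 := by
  induction l generalizing h with
  | nil => exact absurd trivial hl
  | cons p l ih =>
      obtain ⟨a, s⟩ := p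
      rw [contProb_cons]
      by_cases ht : G.trans (lastState h) a s = 0
      · rw [ht, mul_zero, zero_mul]
      · have hv : ¬ ValidFrom G s l := fun hv => hl ⟨ht, hv⟩
        rw [ih _ (by rwa [lastState_snocH]), mul_zero]

lemma stage_prefixRun (r : G.Run) (n : ℕ) (hn : 1 ≤ n) : stage (prefixRun r n) = n := by
  simp only [stage, prefixRun, List.length_ofFn]
  omega

lemma prefixRun_stage_eq {h : G.History} {r : G.Run} (hr : r ∈ cyl h) :
    prefixRun r (stage h) = h := by
  obtain ⟨h1, h2⟩ := hr
  refine Prod.ext h1 ?_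
  refine List.ext_get (by simp [stage, prefixRun]) fun k hk1 hk2 => ?_
  have hk : k < (stage h) - 1 := by simpa [stage, prefixRun] using hk1
  simp only [prefixRun, List.get_ofFn]
  have := h2 k hk2
  simp only [List.get_eq_getElem] at this ⊢
  simpa using this

lemma mem_cyl_of_prefixRun {h : G.History} {r : G.Run} (hr : prefixRun r (stage h) = h) :
    r ∈ cyl h := by
  have h1 : r.1 = h.1 := by rw [← hr]; rfl
  refine ⟨h1, fun k hk => ?_⟩
  have h2 : (List.ofFn fun j : Fin (stage h - 1) => r.2 j) = h.2 := congrArg Prod.snd hr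
  have hk' : k < stage h - 1 := by have hs : stage h = h.2.length + 1 := rfl; omega
  have h3 := List.get_of_eq h2 ⟨k, by simpa using hk'⟩
  simp only [List.get_eq_getElem, List.getElem_ofFn] at h3
  simpa using h3


lemma preimage_prefixRun_eq_cyl {h : G.History} {n : ℕ} (hs : stage h = n) :
    {r : G.Run | prefixRun r n = h} = cyl h := by
  ext r
  subst hs
  exact ⟨fun hr => mem_cyl_of_prefixRun hr, fun hr => prefixRun_stage_eq hr⟩

lemma preimage_prefixRun_eq_empty {h : G.History} {n : ℕ} (hn : 1 ≤ n) (hs : stage h ≠ n) :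
    {r : G.Run | prefixRun r n = h} = ∅ := by
  ext r
  simp only [Set.mem_setOf_eq, Set.mem_empty_iff_false, iff_false]
  intro hr
  exact hs (by rw [← hr, stage_prefixRun r n hn])

lemma cyl_catH_subset (h : G.History) (l : List (G.ActionProfile × G.S)) :
    cyl (catH h l) ⊆ cyl h := by
  rintro r ⟨h1, h2⟩
  refine ⟨h1, fun k hk => ?_⟩
  have hk' : k < (catH h l).2.length := by simp [catH]; omega
  have := h2 k hk'
  simp only [List.get_eq_getElem] at this ⊢
  rw [this]
  simp only [catH]
  exact List.getElem_append_left hk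

lemma cyl_trichotomy (h h' : G.History) :
    (∃ l, h' = catH h l) ∨ (∃ l, h = catH h' l) ∨ cyl h ∩ cyl h' = ∅ := by
  by_cases hs : h.1 = h'.1
  · have key : ∀ (e e' : G.History), e.1 = e'.1 → e.2.length ≤ e'.2.length →
        (∀ r : G.Run, r ∈ cyl e → r ∈ cyl e' → False) ∨ (∃ l, e' = catH e l) := by
      intro e e' he hlen
      by_cases hp : e.2 <+: e'.2
      · right
        obtain ⟨l, hl⟩ := hp
        exact ⟨l, Prod.ext he.symm (by rw [← hl, catH])⟩
      · left
        intro r hr hr'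
        apply hp
        have : e.2 = e'.2.take e.2.length := by
          refine List.ext_get (by simp [hlen]) fun k hk1 hk2 => ?_
          have hk2' : k < e'.2.length := lt_of_lt_of_le hk1 hlen
          have := (hr.2 k hk1).symm.trans (hr'.2 k hk2')
          simp only [List.get_eq_getElem] at this ⊢
          simpa [List.getElem_take] using this
        rw [this]
        exact List.take_prefix _ _
    rcases le_total h.2.length h'.2.length with hlen | hlen
    · rcases key h h' hs hlen with hdisj | hcat
      · right; right
        ext r; simp only [Set.mem_inter_iff, Set.mem_empty_iff_false, iff_false, not_and]
        exact fun hr hr' => hdisj r hr hr'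
      · exact Or.inl hcat
    · rcases key h' h hs.symm hlen with hdisj | hcat
      · right; right
        ext r; simp only [Set.mem_inter_iff, Set.mem_empty_iff_false, iff_false, not_and]
        exact fun hr hr' => hdisj r hr' hr
      · exact Or.inr (Or.inl hcat)
  · right; right
    ext r
    simp only [Set.mem_inter_iff, Set.mem_empty_iff_false, iff_false, not_and]
    intro hr hr'
    exact absurd (hr.1 ▸ hr'.1 ▸ rfl) hs



instance : MeasurableSingletonClass G.S := ⟨fun _ => MeasurableSpace.measurableSet_top⟩

instance : MeasurableSingletonClass G.ActionProfile :=
  ⟨fun _ => MeasurableSpace.measurableSet_top⟩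

instance : Countable G.History := inferInstance

lemma measurableSet_cyl (h : G.History) : MeasurableSet (cyl h) := by
  have hrw : cyl h = (Prod.fst ⁻¹' {h.1}) ∩
      ⋂ k : Fin h.2.length, (fun r : G.Run => r.2 (k : ℕ)) ⁻¹' {h.2.get k} := by
    ext r
    simp only [cyl, Set.mem_setOf_eq, Set.mem_inter_iff, Set.mem_preimage,
      Set.mem_singleton_iff, Set.mem_iInter]
    constructor
    · rintro ⟨h1, h2⟩; exact ⟨h1, fun k => h2 k k.2⟩
    · rintro ⟨h1, h2⟩; exact ⟨h1, fun k hk => h2 ⟨k, hk⟩⟩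
  rw [hrw]
  exact (measurable_fst (measurableSet_singleton _)).inter
    (MeasurableSet.iInter fun k =>
      ((measurable_pi_apply (k : ℕ)).comp measurable_snd) (measurableSet_singleton _))

lemma measurableSet_preSingle {m : MeasurableSpace G.Run}
    (hcyl : ∀ h : G.History, MeasurableSet[m] (cyl h)) (n : ℕ) (hn : 1 ≤ n) (h : G.History) :
    MeasurableSet[m] {r : G.Run | prefixRun r n = h} := by
  by_cases hs : stage h = n
  · rw [preimage_prefixRun_eq_cyl hs]; exact hcyl h
  · rw [preimage_prefixRun_eq_empty hn hs]; exact MeasurableSet.empty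

lemma pre_eq_iUnion (n : ℕ) (T : Set G.History) :
    (fun r : G.Run => prefixRun r n) ⁻¹' T =
      ⋃ h : T, {r : G.Run | prefixRun r n = (h : G.History)} := by
  ext r
  simp only [Set.mem_preimage, Set.mem_iUnion, Set.mem_setOf_eq]
  exact ⟨fun hr => ⟨⟨_, hr⟩, rfl⟩, by rintro ⟨⟨h, hh⟩, rfl⟩; exact hh⟩

lemma disjoint_preSingle (n : ℕ) :
    Pairwise (Function.onFun Disjoint fun h : G.History => {r : G.Run | prefixRun r n = h}) :=
  fun _ _ hne => Set.disjoint_left.mpr fun _ hr hr' => hne (hr.symm.trans hr')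

lemma measurableSet_pre {m : MeasurableSpace G.Run}
    (hcyl : ∀ h : G.History, MeasurableSet[m] (cyl h)) (n : ℕ) (hn : 1 ≤ n)
    (T : Set G.History) : MeasurableSet[m] ((fun r : G.Run => prefixRun r n) ⁻¹' T) := by
  rw [pre_eq_iUnion]
  exact MeasurableSet.iUnion fun h => measurableSet_preSingle hcyl n hn _

lemma filt_le_of_cyl {m : MeasurableSpace G.Run}
    (hcyl : ∀ h : G.History, MeasurableSet[m] (cyl h)) (n : ℕ) (hn : 1 ≤ n) :
    G.filt n ≤ m := by
  intro t ht
  obtain ⟨T, -, rfl⟩ := MeasurableSpace.measurableSet_comap.mp ht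
  exact measurableSet_pre hcyl n hn T

lemma filt_le (n : ℕ) (hn : 1 ≤ n) : G.filt n ≤ (inferInstance : MeasurableSpace G.Run) :=
  filt_le_of_cyl measurableSet_cyl n hn

lemma prefixRun_succ_eq (r : G.Run) (n : ℕ) :
    prefixRun r (n + 1) = ((prefixRun r (n + 2)).1, (prefixRun r (n + 2)).2.take n) := by
  refine Prod.ext rfl ?_
  refine List.ext_get (by simp [prefixRun]) fun k hk1 hk2 => ?_
  have hk : k < n := by simpa [prefixRun] using hk1
  simp only [prefixRun, List.get_eq_getElem, List.getElem_take, List.getElem_ofFn]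

lemma filt_mono_succ (n : ℕ) : G.filt (n + 1) ≤ G.filt (n + 2) := by
  intro t ht
  obtain ⟨T, -, rfl⟩ := MeasurableSpace.measurableSet_comap.mp ht
  refine MeasurableSpace.measurableSet_comap.mpr
    ⟨(fun h : G.History => (h.1, h.2.take n)) ⁻¹' T, MeasurableSpace.measurableSet_top, ?_⟩
  ext r
  simp only [Set.mem_preimage]
  rw [← prefixRun_succ_eq]

lemma measurable_of_pre {m : MeasurableSpace G.Run} {n : ℕ} (hm : G.filt n ≤ m)
    {β : Type*} [mβ : MeasurableSpace β] (g : G.History → β) :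
    @Measurable _ _ m _ (fun r : G.Run => g (prefixRun r n)) := by
  intro T _
  exact hm _ (MeasurableSpace.measurableSet_comap.mpr
    ⟨g ⁻¹' T, MeasurableSpace.measurableSet_top, rfl⟩)

lemma getD_prefixRun (r : G.Run) (k : ℕ) :
    (prefixRun r (k + 2)).2.getD k (Classical.arbitrary _) = r.2 k := by
  simp only [prefixRun]
  rw [List.getD_eq_getElem _ _ (by simp)]
  simp only [List.getElem_ofFn]

lemma prod_le_of_filt {m : MeasurableSpace G.Run} (hm : ∀ n, 1 ≤ n → G.filt n ≤ m) :
    (Prod.instMeasurableSpace : MeasurableSpace G.Run) ≤ m := by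
  have h1 : @Measurable _ _ m _ (fun r : G.Run => r.1) :=
    measurable_of_pre (hm 1 le_rfl) (fun h : G.History => h.1)
  have h2 : ∀ k : ℕ, @Measurable _ _ m _ (fun r : G.Run => r.2 k) := by
    intro k
    have hme := measurable_of_pre (hm (k + 2) (by omega))
      (fun h : G.History => h.2.getD k (Classical.arbitrary _))
    have heq : (fun r : G.Run => (prefixRun r (k + 2)).2.getD k (Classical.arbitrary _)) =
        fun r : G.Run => r.2 k := by
      funext r; exact getD_prefixRun r k
    rwa [heq] at hme
  have hid : @Measurable _ _ m Prod.instMeasurableSpace (id : G.Run → G.Run) :=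
    @Measurable.prod _ _ _ m _ _ id h1 (measurable_pi_iff.mpr h2)
  intro t ht
  simpa using hid ht

lemma isPiSystem_cyl : IsPiSystem {t : Set G.Run | ∃ h : G.History, t = cyl h} := by
  rintro t ⟨h, rfl⟩ t' ⟨h', rfl⟩ hne
  rcases cyl_trichotomy h h' with ⟨l, rfl⟩ | ⟨l, rfl⟩ | hd
  · exact ⟨catH h l, Set.inter_eq_right.mpr (cyl_catH_subset h l)⟩
  · exact ⟨catH h' l, Set.inter_eq_left.mpr (cyl_catH_subset h' l)⟩
  · exact absurd hd (Set.nonempty_iff_ne_empty.mp hne)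

lemma prod_eq_generateFrom_cyl : (Prod.instMeasurableSpace : MeasurableSpace G.Run) =
    MeasurableSpace.generateFrom {t : Set G.Run | ∃ h : G.History, t = cyl h} := by
  refine le_antisymm ?_ (MeasurableSpace.generateFrom_le ?_)
  · refine prod_le_of_filt (m := MeasurableSpace.generateFrom {t : Set G.Run | ∃ h : G.History, t = cyl h}) fun n hn => filt_le_of_cyl (fun h => ?_) n hn
    exact MeasurableSpace.measurableSet_generateFrom ⟨h, rfl⟩
  · rintro t ⟨h, rfl⟩
    exact measurableSet_cyl h



lemma mem_cyl_initH (s : G.S) (r : G.Run) : r ∈ cyl (G.initH s) ↔ r.1 = s := by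
  constructor
  · exact fun hr => hr.1
  · intro h1
    exact ⟨h1, fun k hk => by simp [initH] at hk⟩

lemma catH_initH {s : G.S} {h : G.History} (hs : h.1 = s) : catH (G.initH s) h.2 = h := by
  refine Prod.ext ?_ ?_ <;> simp [catH, initH, hs.symm]

section Induced

variable {P : G.History → G.Profile → Measure G.Run} (hP : IsInducedFamily G P)

include hP

lemma P_cyl_self (h : G.History) (σ : G.Profile) : P h σ (cyl h) = 1 := by
  have := hP.2 h σ []
  rwa [catH_nil, contProb_nil] at this

lemma P_cyl_compl (h : G.History) (σ : G.Profile) : P h σ ((cyl h)ᶜ) = 0 := by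
  haveI := hP.1 h σ
  rw [prob_compl_eq_one_sub (measurableSet_cyl h), P_cyl_self hP, tsub_self]

lemma P_null_of_disjoint {h : G.History} {t : Set G.Run} (σ : G.Profile)
    (hd : t ∩ cyl h = ∅) : P h σ t = 0 := by
  refine measure_mono_null ?_ (P_cyl_compl hP h σ)
  rw [Set.subset_compl_iff_disjoint_right, Set.disjoint_iff_inter_eq_empty]
  exact hd

lemma restrict_cyl (h : G.History) (σ : G.Profile) (l : List (G.ActionProfile × G.S)) :
    (P h σ).restrict (cyl (catH h l)) = P h σ (cyl (catH h l)) • P (catH h l) σ := by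
  haveI := hP.1 h σ
  haveI := hP.1 (catH h l) σ
  refine ext_of_generate_finite _ prod_eq_generateFrom_cyl isPiSystem_cyl ?_ ?_
  · rintro t ⟨h', rfl⟩
    rw [Measure.restrict_apply (measurableSet_cyl h'), Measure.smul_apply, smul_eq_mul]
    rcases cyl_trichotomy (catH h l) h' with ⟨l', rfl⟩ | ⟨l', hc⟩ | hd
    · rw [Set.inter_eq_left.mpr (cyl_catH_subset _ l')]
      have e1 : P h σ (cyl (catH (catH h l) l')) = contProb σ h (l ++ l') := by
        rw [← catH_assoc]
        exact hP.2 h σ (l ++ l')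
      rw [e1, hP.2 h σ l, hP.2 (catH h l) σ l', contProb_append]
    · have hsub : cyl (catH h l) ⊆ cyl h' := by
        conv_lhs => rw [hc]
        exact cyl_catH_subset h' l'
      rw [Set.inter_eq_right.mpr hsub]
      have h1 : P (catH h l) σ (cyl h') = 1 := by
        refine le_antisymm prob_le_one ?_
        calc (1 : ℝ≥0∞) = P (catH h l) σ (cyl (catH h l)) := (P_cyl_self hP _ σ).symm
          _ ≤ P (catH h l) σ (cyl h') := measure_mono hsub
      rw [h1, mul_one]
    · have h0 : P (catH h l) σ (cyl h') = 0 :=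
        P_null_of_disjoint hP σ (by rw [Set.inter_comm]; exact hd)
      rw [Set.inter_comm, hd, measure_empty, h0, mul_zero]
  · rw [Measure.restrict_apply MeasurableSet.univ, Set.univ_inter, Measure.smul_apply,
      smul_eq_mul, measure_univ, mul_one]

lemma P_cyl_zero_of_ne {s : G.S} {h : G.History} (σ : G.Profile) (hs : h.1 ≠ s) :
    P (G.initH s) σ (cyl h) = 0 := by
  refine P_null_of_disjoint hP σ ?_
  ext r
  simp only [Set.mem_inter_iff, Set.mem_empty_iff_false, iff_false, not_and]
  intro hr hr'
  exact hs (hr.1 ▸ ((mem_cyl_initH s r).mp hr') ▸ rfl)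

lemma P_cyl_zero_of_not_valid {s : G.S} {h : G.History} (σ : G.Profile) (hs : h.1 = s)
    (hv : ¬ Valid h) : P (G.initH s) σ (cyl h) = 0 := by
  rw [← catH_initH hs, hP.2, contProb_eq_zero]
  rw [lastState_initH]
  rw [← hs]
  exact hv

end Induced



section Integrals

variable {P : G.History → G.Profile → Measure G.Run} (hP : IsInducedFamily G P)
  {f : G.Run → ℝ} (hfm' : Measurable f) (hf1 : ∀ r, |f r| ≤ 1)

include hP hfm' hf1

lemma integrable_f (h : G.History) (σ : G.Profile) : Integrable f (P h σ) := by
  haveI := hP.1 h σ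
  exact (integrable_const 1).mono' hfm'.aestronglyMeasurable
    (ae_of_all _ fun r => by simpa [Real.norm_eq_abs] using hf1 r)

lemma abs_integral_le_one (h : G.History) (σ : G.Profile) : |∫ r, f r ∂(P h σ)| ≤ 1 := by
  haveI := hP.1 h σ
  calc |∫ r, f r ∂(P h σ)| ≤ ∫ r, |f r| ∂(P h σ) := by
        simpa [Real.norm_eq_abs] using
          norm_integral_le_integral_norm (μ := P h σ) (f := f)
    _ ≤ ∫ _r, (1 : ℝ) ∂(P h σ) :=
        integral_mono (integrable_f hP hfm' hf1 h σ).abs (integrable_const 1) fun r => hf1 r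
    _ = 1 := by simp

lemma setIntegral_cyl (σ : G.Profile) (h : G.History) (l : List (G.ActionProfile × G.S)) :
    ∫ r in cyl (catH h l), f r ∂(P h σ)
      = (P h σ (cyl (catH h l))).toReal * ∫ r, f r ∂(P (catH h l) σ) := by
  rw [show (P h σ).restrict (cyl (catH h l)) = P h σ (cyl (catH h l)) • P (catH h l) σ from
    restrict_cyl hP h σ l, integral_smul_measure, smul_eq_mul]

lemma setIntegral_preSingle (σ : G.Profile) (s : G.S) (n : ℕ) (hn : 1 ≤ n) (h : G.History) :
    ∫ r in {r : G.Run | prefixRun r n = h}, f r ∂(P (G.initH s) σ)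
      = ∫ r in {r : G.Run | prefixRun r n = h},
          (∫ r', f r' ∂(P (prefixRun r n) σ)) ∂(P (G.initH s) σ) := by
  by_cases hs : stage h = n
  · rw [preimage_prefixRun_eq_cyl hs]
    by_cases h1 : h.1 = s
    · have e1 := setIntegral_cyl hP hfm' hf1 σ (G.initH s) h.2
      rw [catH_initH h1] at e1
      have e2 : ∫ r in cyl h, (∫ r', f r' ∂(P (prefixRun r n) σ)) ∂(P (G.initH s) σ)
          = ∫ _r in cyl h, (∫ r', f r' ∂(P h σ)) ∂(P (G.initH s) σ) := by
        refine setIntegral_congr_fun (measurableSet_cyl h) fun r hr => ?_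
        rw [← preimage_prefixRun_eq_cyl hs] at hr
        rw [hr]
      rw [e1, e2, setIntegral_const, smul_eq_mul]; rfl
    · have h0 : (P (G.initH s) σ).restrict (cyl h) = 0 :=
        Measure.restrict_eq_zero.mpr (P_cyl_zero_of_ne hP σ h1)
      rw [h0, integral_zero_measure, integral_zero_measure]
  · rw [preimage_prefixRun_eq_empty hn hs, Measure.restrict_empty, integral_zero_measure,
      integral_zero_measure]

lemma condexp_eq (σ : G.Profile) (s : G.S) (n : ℕ) (hn : 1 ≤ n) :
    (fun r : G.Run => ∫ r', f r' ∂(P (prefixRun r n) σ))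
      =ᵐ[P (G.initH s) σ] (P (G.initH s) σ)[f | G.filt n] := by
  haveI := hP.1 (G.initH s) σ
  have hXm : @Measurable _ _ (G.filt n) _
      (fun r : G.Run => ∫ r', f r' ∂(P (prefixRun r n) σ)) :=
    measurable_of_pre le_rfl (fun h => ∫ r', f r' ∂(P h σ))
  have hXm0 : Measurable (fun r : G.Run => ∫ r', f r' ∂(P (prefixRun r n) σ)) :=
    hXm.mono (filt_le n hn) le_rfl
  have hXi : Integrable (fun r : G.Run => ∫ r', f r' ∂(P (prefixRun r n) σ))
      (P (G.initH s) σ) := by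
    refine (integrable_const 1).mono' hXm0.aestronglyMeasurable (ae_of_all _ fun r => ?_)
    simpa [Real.norm_eq_abs] using abs_integral_le_one hP hfm' hf1 (prefixRun r n) σ
  refine ae_eq_condExp_of_forall_setIntegral_eq (filt_le n hn)
    (integrable_f hP hfm' hf1 _ σ) (fun t ht _ => hXi.integrableOn) (fun t ht _ => ?_)
    (hXm.stronglyMeasurable.aestronglyMeasurable)
  obtain ⟨T, -, rfl⟩ := MeasurableSpace.measurableSet_comap.mp ht
  rw [pre_eq_iUnion n T]
  have hmeas : ∀ h : T, MeasurableSet {r : G.Run | prefixRun r n = (h : G.History)} :=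
    fun h => measurableSet_preSingle measurableSet_cyl n hn _
  have hdisj : Pairwise (Function.onFun Disjoint
      fun h : T => {r : G.Run | prefixRun r n = (h : G.History)}) :=
    fun a b hne => disjoint_preSingle n (fun hc => hne (Subtype.ext hc))
  have e1 := integral_iUnion (μ := P (G.initH s) σ)
    (s := fun h : T => {r : G.Run | prefixRun r n = (h : G.History)})
    (f := fun r : G.Run => ∫ r', f r' ∂(P (prefixRun r n) σ)) hmeas hdisj
    (by rw [← pre_eq_iUnion n T]; exact hXi.integrableOn)
  have e2 := integral_iUnion (μ := P (G.initH s) σ)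
    (s := fun h : T => {r : G.Run | prefixRun r n = (h : G.History)})
    (f := f) hmeas hdisj
    (by rw [← pre_eq_iUnion n T]; exact (integrable_f hP hfm' hf1 _ σ).integrableOn)
  rw [e1, e2]
  exact tsum_congr fun h => (setIntegral_preSingle hP hfm' hf1 σ s n hn h).symm

end Integrals



lemma le_iSup_filt : (Prod.instMeasurableSpace : MeasurableSpace G.Run)
    ≤ ⨆ n, G.filt (n + 1) := by
  refine prod_le_of_filt fun n hn => ?_
  have hn' : n = (n - 1) + 1 := by omega
  rw [hn']
  exact le_iSup (fun k => G.filt (k + 1)) (n - 1)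

noncomputable def filtration (G : StochGame) :
    Filtration ℕ (Prod.instMeasurableSpace : MeasurableSpace G.Run) where
  seq n := G.filt (n + 1)
  mono' := monotone_nat_of_le_succ fun n => filt_mono_succ n
  le' n := filt_le (n + 1) (by omega)

section Levy

variable {P : G.History → G.Profile → Measure G.Run} (hP : IsInducedFamily G P)
  {f : G.Run → ℝ} (hfm' : Measurable f) (hf1 : ∀ r, |f r| ≤ 1)

include hP hfm' hf1

lemma levy (σ : G.Profile) (s : G.S) :
    ∀ᵐ r ∂(P (G.initH s) σ), Filter.Tendsto
      (fun n => ∫ r', f r' ∂(P (prefixRun r (n + 1)) σ)) Filter.atTop (nhds (f r)) := by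
  haveI := hP.1 (G.initH s) σ
  have hg : StronglyMeasurable[⨆ n, (filtration G) n] f :=
    (hfm'.mono le_iSup_filt le_rfl).stronglyMeasurable
  have hconv := (integrable_f hP hfm' hf1 (G.initH s) σ).tendsto_ae_condExp hg
  have hcond : ∀ n : ℕ, (fun r : G.Run => ∫ r', f r' ∂(P (prefixRun r (n + 1)) σ))
      =ᵐ[P (G.initH s) σ] (P (G.initH s) σ)[f | (filtration G) n] :=
    fun n => condexp_eq hP hfm' hf1 σ s (n + 1) (by omega)
  have hall : ∀ᵐ r ∂(P (G.initH s) σ), ∀ n : ℕ,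
      (∫ r', f r' ∂(P (prefixRun r (n + 1)) σ)) = ((P (G.initH s) σ)[f | (filtration G) n]) r :=
    MeasureTheory.ae_all_iff.mpr fun n => hcond n
  filter_upwards [hconv, hall] with r hr hreq
  exact Filter.Tendsto.congr (fun n => (hreq n).symm) hr

end Levy



noncomputable instance (i : G.I) : Nonempty (PMF (G.A i)) :=
  ⟨PMF.pure (Classical.arbitrary _)⟩

lemma sum_toReal_pmf {α : Type} [Fintype α] (x : PMF α) : ∑ b : α, (x b).toReal = 1 := by
  have h1 : ∑' b : α, x b = 1 := x.tsum_coe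
  rw [tsum_fintype] at h1
  rw [← ENNReal.toReal_sum (fun b _ => x.apply_ne_top b), h1, ENNReal.toReal_one]

lemma sum_prod_toReal (x : ∀ j, PMF (G.A j)) :
    ∑ a : G.ActionProfile, ∏ i, (x i (a i)).toReal = 1 := by
  have := Finset.prod_univ_sum (fun i : G.I => (Finset.univ : Finset (G.A i)))
    (fun i b => (x i b).toReal)
  rw [Fintype.piFinset_univ] at this
  rw [← this]
  rw [Finset.prod_congr rfl fun i _ => sum_toReal_pmf (x i)]
  simp

lemma tsum_trans_toReal (s : G.S) (a : G.ActionProfile) :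
    ∑' t : G.S, (G.trans s a t).toReal = 1 := by
  rw [← ENNReal.tsum_toReal_eq (fun t => (G.trans s a).apply_ne_top t), (G.trans s a).tsum_coe,
    ENNReal.toReal_one]

lemma summable_trans_mul (s : G.S) (a : G.ActionProfile) (g : G.S → ℝ) {C : ℝ}
    (hg : ∀ t, |g t| ≤ C) : Summable fun t : G.S => (G.trans s a t).toReal * g t := by
  have hsum : Summable fun t : G.S => (G.trans s a t).toReal :=
    ENNReal.summable_toReal (by rw [(G.trans s a).tsum_coe]; exact ENNReal.one_ne_top)
  refine (hsum.mul_right C).of_norm_bounded fun t => ?_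
  rw [Real.norm_eq_abs, abs_mul, abs_of_nonneg ENNReal.toReal_nonneg]
  exact mul_le_mul_of_nonneg_left (hg t) ENNReal.toReal_nonneg

lemma abs_tsum_trans_le (s : G.S) (a : G.ActionProfile) (g : G.S → ℝ) {C : ℝ}
    (hg : ∀ t, |g t| ≤ C) : |∑' t : G.S, (G.trans s a t).toReal * g t| ≤ C := by
  have hsum : Summable fun t : G.S => (G.trans s a t).toReal :=
    ENNReal.summable_toReal (by rw [(G.trans s a).tsum_coe]; exact ENNReal.one_ne_top)
  have habs : ∀ t, |(G.trans s a t).toReal * g t| = (G.trans s a t).toReal * |g t| := fun t => by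
    rw [abs_mul, abs_of_nonneg ENNReal.toReal_nonneg]
  have hs2 : Summable fun t : G.S => (G.trans s a t).toReal * |g t| :=
    summable_trans_mul s a (fun t => |g t|) (fun t => by rw [abs_abs]; exact hg t)
  have hs3 : Summable fun t : G.S => |(G.trans s a t).toReal * g t| :=
    hs2.congr fun t => (habs t).symm
  have h1 : |∑' t : G.S, (G.trans s a t).toReal * g t|
      ≤ ∑' t : G.S, |(G.trans s a t).toReal * g t| := by
    simpa only [Real.norm_eq_abs] using
      norm_tsum_le_tsum_norm (f := fun t : G.S => (G.trans s a t).toReal * g t)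
        (by simpa only [Real.norm_eq_abs] using hs3)
  refine h1.trans ?_
  calc ∑' t : G.S, |(G.trans s a t).toReal * g t|
      ≤ ∑' t : G.S, (G.trans s a t).toReal * C := by
        refine Summable.tsum_le_tsum (fun t => ?_) hs3 (hsum.mul_right C)
        rw [habs t]
        exact mul_le_mul_of_nonneg_left (hg t) ENNReal.toReal_nonneg
    _ = C := by rw [tsum_mul_right, tsum_trans_toReal, one_mul]

lemma abs_oneShotExp_le {D : G.History → ℝ} {C : ℝ} (hC : ∀ h, |D h| ≤ C) (h : G.History)
    (x : ∀ j, PMF (G.A j)) : |oneShotExp D h x| ≤ C := by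
  have hC0 : 0 ≤ C := le_trans (abs_nonneg _) (hC h)
  unfold oneShotExp
  calc |∑ a : G.ActionProfile, (∏ i, (x i (a i)).toReal) *
        ∑' t : G.S, (G.trans (lastState h) a t).toReal * D (snocH h a t)|
      ≤ ∑ a : G.ActionProfile, |(∏ i, (x i (a i)).toReal) *
        ∑' t : G.S, (G.trans (lastState h) a t).toReal * D (snocH h a t)| :=
        Finset.abs_sum_le_sum_abs _ _
    _ ≤ ∑ a : G.ActionProfile, (∏ i, (x i (a i)).toReal) * C := by
        refine Finset.sum_le_sum fun a _ => ?_
        rw [abs_mul, abs_of_nonneg (Finset.prod_nonneg fun i _ => ENNReal.toReal_nonneg)]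
        exact mul_le_mul_of_nonneg_left
          (abs_tsum_trans_le (lastState h) a _ fun t => hC _)
          (Finset.prod_nonneg fun i _ => ENNReal.toReal_nonneg)
    _ = C := by rw [← Finset.sum_mul, sum_prod_toReal, one_mul]

lemma oneShotMinmax_le_nash {D : G.History → ℝ} {C : ℝ} (hC : ∀ h, |D h| ≤ C) (i : G.I)
    (h : G.History) {x₀ : ∀ j, PMF (G.A j)}
    (hnash : ∀ y : PMF (G.A i), oneShotExp D h (Function.update x₀ i y) ≤ oneShotExp D h x₀) :
    oneShotMinmax D i h ≤ oneShotExp D h x₀ := by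
  have hbdd : BddBelow (Set.range fun x : ∀ j, PMF (G.A j) =>
      ⨆ y : PMF (G.A i), oneShotExp D h (Function.update x i y)) := by
    refine ⟨-C, ?_⟩
    rintro v ⟨x, rfl⟩
    have hmem : oneShotExp D h (Function.update x i (x i))
        ≤ ⨆ y : PMF (G.A i), oneShotExp D h (Function.update x i y) := by
      refine le_ciSup (f := fun y : PMF (G.A i) => oneShotExp D h (Function.update x i y)) ⟨C, ?_⟩ (x i)
      rintro v ⟨y, rfl⟩
      exact le_trans (le_abs_self _) (abs_oneShotExp_le hC h _)
    refine le_trans ?_ hmem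
    rw [Function.update_eq_self]
    exact neg_le_of_abs_le (abs_oneShotExp_le hC h x)
  refine le_trans (ciInf_le hbdd x₀) (ciSup_le fun y => hnash y)

lemma minmax_chain {P : G.History → G.Profile → Measure G.Run} {δ : ℝ}
    {D : G.I → G.History → ℝ} {σstar : G.Profile} (i : G.I)
    (hDi : IsMartinMinmax P δ i (D i))
    (hσstar : ∀ h : G.History, Valid h → OneShotNash D h (fun j => σstar j h))
    (h : G.History) (hv : Valid h) :
    minmaxVal P i h ≤ expPay P h σstar i + δ := by
  obtain ⟨C, hC⟩ := hDi.1
  have h1 : minmaxVal P i h - δ ≤ D i h := (hDi.2.1 h hv).1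
  have h2 : D i h ≤ oneShotMinmax (D i) i h := hDi.2.2.1 h hv
  have h3 : oneShotMinmax (D i) i h ≤ expPay P h σstar i := by
    refine hDi.2.2.2 h hv σstar
      (fun h' hv' _ => oneShotMinmax_le_nash hC i h' (hσstar h' hv' i)) h hv
      ⟨rfl, List.prefix_refl _⟩
  linarith



lemma prefixRun_congr (r : G.Run) {m n : ℕ} (h : m - 1 = n - 1) :
    prefixRun r m = prefixRun r n := by
  refine Prod.ext rfl ?_
  simp only [prefixRun]
  rw [h]

lemma prefixRun_stage_self (r : G.Run) (k : ℕ) :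
    prefixRun r (stage (prefixRun r k)) = prefixRun r k :=
  prefixRun_congr r (by simp [stage, prefixRun])

lemma ae_valid {P : G.History → G.Profile → Measure G.Run} (hP : IsInducedFamily G P)
    (σ : G.Profile) (s : G.S) :
    ∀ᵐ r ∂(P (G.initH s) σ), ∀ k : ℕ, Valid (prefixRun r k) := by
  haveI := hP.1 (G.initH s) σ
  have hnull : P (G.initH s) σ (⋃ h : {h : G.History // ¬ Valid h},
      {r : G.Run | prefixRun r (stage (h : G.History)) = (h : G.History)}) = 0 := by
    refine measure_iUnion_null fun h => ?_
    rw [preimage_prefixRun_eq_cyl rfl]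
    by_cases h1 : (h : G.History).1 = s
    · exact P_cyl_zero_of_not_valid hP σ h1 h.2
    · exact P_cyl_zero_of_ne hP σ h1
  rw [MeasureTheory.ae_iff]
  refine measure_mono_null ?_ hnull
  intro r hr
  simp only [Set.mem_setOf_eq, not_forall] at hr
  obtain ⟨k, hk⟩ := hr
  simp only [Set.mem_iUnion]
  exact ⟨⟨prefixRun r k, hk⟩, prefixRun_stage_self r k⟩



theorem exists_good_subgame' (G : StochGame)
    (P : G.History → G.Profile → Measure G.Run) (hP : IsInducedFamily G P)
    (hfm : ∀ i, Measurable (G.payoff i))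
    (hf01 : ∀ (i : G.I) (r : G.Run), G.payoff i r ∈ Set.Icc (0 : ℝ) 1)
    (δ : ℝ) (hδ0 : 0 < δ) (hδ1 : δ < 1)
    (D : G.I → G.History → ℝ) (hD : ∀ i, IsMartinMinmax P δ i (D i))
    (σstar : G.Profile)
    (hσstar : ∀ h : G.History, Valid h → OneShotNash D h (fun j => σstar j h))
    (s : G.S) :
    ∃ (nstar : ℕ) (hstar : G.History), Valid hstar ∧ hstar.1 = s ∧ stage hstar = nstar ∧
      ENNReal.ofReal (1 - δ) <
        P hstar σstar
          {r : G.Run | r ∈ cyl hstar ∧ ∀ i : G.I,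
            |G.payoff i r - expPay P hstar σstar i| ≤ δ ∧
            ∀ k : ℕ, nstar ≤ k →
              minmaxVal P i (prefixRun r k) ≤ expPay P hstar σstar i + 2 * δ} := by
  classical
  haveI := hP.1 (G.initH s) σstar
  set μ := P (G.initH s) σstar with hμdef
  have hf1 : ∀ (i : G.I) (r : G.Run), |G.payoff i r| ≤ 1 := fun i r =>
    abs_le.mpr ⟨by linarith [(hf01 i r).1], (hf01 i r).2⟩
  have hlevy : ∀ᵐ r ∂μ, ∀ i : G.I, Filter.Tendsto
      (fun n => expPay P (prefixRun r (n + 1)) σstar i) Filter.atTop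
      (nhds (G.payoff i r)) := by
    rw [MeasureTheory.ae_all_iff]
    intro i
    exact levy hP (hfm i) (hf1 i) σstar s
  have hvalid := ae_valid hP σstar s
  set W : ℕ → Set G.Run := fun N => {r | (∀ k, Valid (prefixRun r k)) ∧
    ∀ i : G.I, ∀ k, N ≤ k →
      |expPay P (prefixRun r k) σstar i - G.payoff i r| ≤ δ / 2} with hWdef
  have hXmeas : ∀ k, 1 ≤ k → ∀ i : G.I,
      Measurable (fun r : G.Run => expPay P (prefixRun r k) σstar i) := fun k hk i =>
    measurable_of_pre (filt_le k hk) (fun h => expPay P h σstar i)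
  have hWmeas : ∀ N, 1 ≤ N → MeasurableSet (W N) := by
    intro N hN1
    have hV : ∀ k, MeasurableSet {r : G.Run | Valid (prefixRun r k)} := by
      intro k
      rcases Nat.eq_zero_or_pos k with hk | hk
      · subst hk
        have hre : {r : G.Run | Valid (prefixRun r 0)} = {r : G.Run | Valid (prefixRun r 1)} := by
          ext r
          simp only [Set.mem_setOf_eq]
          rw [prefixRun_congr (m := 0) (n := 1) r rfl]
        rw [hre]
        exact measurableSet_pre measurableSet_cyl 1 le_rfl {h | Valid h}
      · exact measurableSet_pre measurableSet_cyl k hk {h | Valid h}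
    have hU : ∀ (i : G.I) (k : ℕ), MeasurableSet {r : G.Run | N ≤ k →
        |expPay P (prefixRun r k) σstar i - G.payoff i r| ≤ δ / 2} := by
      intro i k
      by_cases hk : N ≤ k
      · have : {r : G.Run | N ≤ k → |expPay P (prefixRun r k) σstar i - G.payoff i r| ≤ δ / 2}
            = {r : G.Run | |expPay P (prefixRun r k) σstar i - G.payoff i r| ≤ δ / 2} := by
          ext r; simp [hk]
        rw [this]
        exact measurableSet_le (((hXmeas k (le_trans hN1 hk) i).sub (hfm i)).abs)
          measurable_const
      · have : {r : G.Run | N ≤ k → |expPay P (prefixRun r k) σstar i - G.payoff i r| ≤ δ / 2}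
            = Set.univ := by
          ext r; simp [hk]
        rw [this]
        exact MeasurableSet.univ
    have hrw : W N = (⋂ k, {r : G.Run | Valid (prefixRun r k)}) ∩
        ⋂ i : G.I, ⋂ k : ℕ, {r : G.Run | N ≤ k →
          |expPay P (prefixRun r k) σstar i - G.payoff i r| ≤ δ / 2} := by
      ext r
      simp only [hWdef, Set.mem_setOf_eq, Set.mem_inter_iff, Set.mem_iInter]
    rw [hrw]
    exact (MeasurableSet.iInter hV).inter
      (MeasurableSet.iInter fun i => MeasurableSet.iInter fun k => hU i k)
  have hWmono : Monotone W := fun N M hNM r hr =>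
    ⟨hr.1, fun i k hk => hr.2 i k (le_trans hNM hk)⟩
  have hWfull : ∀ᵐ r ∂μ, r ∈ ⋃ N, W (N + 1) := by
    filter_upwards [hlevy, hvalid] with r hl hv
    have hM : ∀ i : G.I, ∃ M : ℕ, ∀ n, M ≤ n →
        |expPay P (prefixRun r (n + 1)) σstar i - G.payoff i r| ≤ δ / 2 := by
      intro i
      obtain ⟨M, hM⟩ := Metric.tendsto_atTop.mp (hl i) (δ / 2) (by linarith)
      refine ⟨M, fun n hn => ?_⟩
      have := hM n hn
      rw [Real.dist_eq] at this
      linarith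
    choose M hM using hM
    refine Set.mem_iUnion.mpr ⟨Finset.univ.sup M, ⟨hv, ?_⟩⟩
    intro i k hk
    have hk1 : M i ≤ k - 1 :=
      le_trans (Finset.le_sup (Finset.mem_univ i)) (by omega)
    have := hM i (k - 1) hk1
    rwa [show k - 1 + 1 = k from by omega] at this
  have hUmeas : MeasurableSet (⋃ N, W (N + 1)) :=
    MeasurableSet.iUnion fun N => hWmeas (N + 1) (by omega)
  have hfull1 : μ (⋃ N, W (N + 1)) = 1 := by
    have h0 : μ ((⋃ N, W (N + 1))ᶜ) = 0 := by
      rw [show (⋃ N, W (N + 1))ᶜ = {r : G.Run | ¬ r ∈ ⋃ N, W (N + 1)} from rfl]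
      exact MeasureTheory.ae_iff.mp hWfull
    have := measure_add_measure_compl (μ := μ) hUmeas
    rw [h0, add_zero, measure_univ] at this
    exact this
  have htt : Filter.Tendsto (fun N => μ (W (N + 1))) Filter.atTop (nhds 1) := by
    rw [← hfull1]
    exact tendsto_measure_iUnion_atTop fun a b hab => hWmono (by omega)
  have hlt1 : (1 : ℝ≥0∞) - ENNReal.ofReal δ < 1 :=
    ENNReal.sub_lt_self ENNReal.one_ne_top one_ne_zero
      (by simp [ENNReal.ofReal_eq_zero]; linarith)
  obtain ⟨N0, hN0⟩ := (htt.eventually_const_lt hlt1).exists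
  set N := N0 + 1 with hNdef
  have hN1 : 1 ≤ N := by omega
  have hμW : 1 - ENNReal.ofReal δ < μ (W N) := hN0
  have hμWc : μ ((W N)ᶜ) < ENNReal.ofReal δ := by
    have hc := prob_compl_eq_one_sub (μ := μ) (hWmeas N hN1)
    rw [hc]
    have hle : ENNReal.ofReal δ ≤ 1 := by
      rw [← ENNReal.ofReal_one]
      exact ENNReal.ofReal_le_ofReal (by linarith)
    have h1' : (1 : ℝ≥0∞) < μ (W N) + ENNReal.ofReal δ :=
      (ENNReal.sub_lt_iff_lt_right ENNReal.ofReal_ne_top hle).mp hμW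
    rw [ENNReal.sub_lt_iff_lt_right (measure_ne_top _ _) prob_le_one, add_comm]
    exact h1'
  have hsel : ∃ hstar : G.History, Valid hstar ∧ hstar.1 = s ∧ stage hstar = N ∧
      P hstar σstar ((W N)ᶜ) < ENNReal.ofReal δ := by
    by_contra hcon
    push_neg at hcon
    have hterm : ∀ h : G.History, ENNReal.ofReal δ * μ {r : G.Run | prefixRun r N = h}
        ≤ μ ((W N)ᶜ ∩ {r : G.Run | prefixRun r N = h}) := by
      intro h
      by_cases hstage : stage h = N
      · rw [preimage_prefixRun_eq_cyl hstage]
        by_cases h1 : h.1 = s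
        · by_cases hv : Valid h
          · have hres := restrict_cyl hP (G.initH s) σstar h.2
            rw [catH_initH h1] at hres
            have heq : μ ((W N)ᶜ ∩ cyl h) = μ (cyl h) * P h σstar ((W N)ᶜ) := by
              rw [← Measure.restrict_apply (hWmeas N hN1).compl, hres, Measure.smul_apply,
                smul_eq_mul]
            rw [heq, mul_comm]
            exact mul_le_mul_right (hcon h hv h1 hstage) _
          · rw [P_cyl_zero_of_not_valid hP σstar h1 hv, mul_zero]
            exact zero_le
        · rw [P_cyl_zero_of_ne hP σstar h1, mul_zero]
          exact zero_le
      · rw [preimage_prefixRun_eq_empty hN1 hstage]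
        simp
    have hpart : μ ((W N)ᶜ) = ∑' h : G.History, μ ((W N)ᶜ ∩ {r : G.Run | prefixRun r N = h}) := by
      have hcover : ⋃ h : G.History, ((W N)ᶜ ∩ {r : G.Run | prefixRun r N = h}) = (W N)ᶜ := by
        ext r
        simp only [Set.mem_iUnion, Set.mem_inter_iff, Set.mem_setOf_eq]
        exact ⟨fun ⟨h, hh⟩ => hh.1, fun hr => ⟨prefixRun r N, hr, rfl⟩⟩
      conv_lhs => rw [← hcover]
      exact measure_iUnion
        (fun a b hab => (disjoint_preSingle N hab).mono Set.inter_subset_right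
          Set.inter_subset_right)
        (fun h => (hWmeas N hN1).compl.inter (measurableSet_preSingle measurableSet_cyl N hN1 h))
    have huniv : (1 : ℝ≥0∞) = ∑' h : G.History, μ {r : G.Run | prefixRun r N = h} := by
      have hcover : ⋃ h : G.History, {r : G.Run | prefixRun r N = h} = Set.univ := by
        ext r
        simp only [Set.mem_iUnion, Set.mem_setOf_eq, Set.mem_univ, iff_true]
        exact ⟨prefixRun r N, rfl⟩
      rw [← measure_univ (μ := μ), ← hcover]
      exact measure_iUnion (disjoint_preSingle N)
        (fun h => measurableSet_preSingle measurableSet_cyl N hN1 h)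
    have hge : ENNReal.ofReal δ ≤ μ ((W N)ᶜ) := by
      calc ENNReal.ofReal δ = ENNReal.ofReal δ * 1 := (mul_one _).symm
        _ = ∑' h : G.History, ENNReal.ofReal δ * μ {r : G.Run | prefixRun r N = h} := by
            rw [huniv, ENNReal.tsum_mul_left]
        _ ≤ ∑' h : G.History, μ ((W N)ᶜ ∩ {r : G.Run | prefixRun r N = h}) :=
            ENNReal.tsum_le_tsum hterm
        _ = μ ((W N)ᶜ) := hpart.symm
    exact absurd hμWc (not_lt.mpr hge)
  obtain ⟨hstar, hvstar, hs1, hstage, hPWc⟩ := hsel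
  haveI := hP.1 hstar σstar
  refine ⟨N, hstar, hvstar, hs1, hstage, ?_⟩
  have hsub : cyl hstar ∩ W N ⊆ {r : G.Run | r ∈ cyl hstar ∧ ∀ i : G.I,
      |G.payoff i r - expPay P hstar σstar i| ≤ δ ∧
      ∀ k : ℕ, N ≤ k → minmaxVal P i (prefixRun r k) ≤ expPay P hstar σstar i + 2 * δ} := by
    rintro r ⟨hrc, hrW⟩
    have hpre : prefixRun r N = hstar := by
      rw [← preimage_prefixRun_eq_cyl hstage] at hrc
      exact hrc
    refine ⟨by rw [← preimage_prefixRun_eq_cyl hstage]; exact hpre, fun i => ?_⟩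
    have hcN := hrW.2 i N le_rfl
    rw [hpre] at hcN
    obtain ⟨hl1, hl2⟩ := abs_le.mp hcN
    constructor
    · exact abs_le.mpr ⟨by linarith, by linarith⟩
    · intro k hk
      have hvk := hrW.1 k
      have hchain := minmax_chain i (hD i) hσstar (prefixRun r k) hvk
      obtain ⟨hm1, hm2⟩ := abs_le.mp (hrW.2 i k hk)
      linarith
  have hcylc : P hstar σstar ((cyl hstar)ᶜ) = 0 := P_cyl_compl hP hstar σstar
  have hWle : P hstar σstar (W N) ≤ P hstar σstar (cyl hstar ∩ W N) := by
    calc P hstar σstar (W N)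
        ≤ P hstar σstar ((cyl hstar ∩ W N) ∪ (cyl hstar)ᶜ) := by
          refine measure_mono fun r hr => ?_
          by_cases hc : r ∈ cyl hstar
          · exact Or.inl ⟨hc, hr⟩
          · exact Or.inr hc
      _ ≤ P hstar σstar (cyl hstar ∩ W N) + P hstar σstar ((cyl hstar)ᶜ) := measure_union_le _ _
      _ = P hstar σstar (cyl hstar ∩ W N) := by rw [hcylc, add_zero]
  have hfinal : ENNReal.ofReal (1 - δ) < P hstar σstar (W N) := by
    have hcompl := measure_add_measure_compl (μ := P hstar σstar) (hWmeas N hN1)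
    rw [measure_univ] at hcompl
    by_contra hcon2
    push_neg at hcon2
    have hlt : (1 : ℝ≥0∞) < 1 := by
      calc (1 : ℝ≥0∞) = P hstar σstar (W N) + P hstar σstar ((W N)ᶜ) := hcompl.symm
        _ < ENNReal.ofReal (1 - δ) + ENNReal.ofReal δ :=
            ENNReal.add_lt_add_of_le_of_lt (measure_ne_top _ _) hcon2 hPWc
        _ = 1 := by
            rw [← ENNReal.ofReal_add (by linarith) hδ0.le]
            norm_num
    exact absurd hlt (lt_irrefl _)
  exact lt_of_lt_of_le hfinal (le_trans hWle (measure_mono hsub))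


/-- **Theorem (identifying a good subgame `Γ_{h*}` and a target payoff `c`).**
Let `δ ∈ (0,1)`, suppose all payoffs lie in `[0,1]`, let `D_i` be a Martin function for the
minmax value (with parameter `δ`) for each player, and let `σ*` play a Nash equilibrium of
the one-shot game `G_O(D,h)` at every history `h`. Then for every initial state `s` there
are a stage `n*` and a history `h*` in stage `n*` such that, with `c_i := E_{h*,σ*}[f_i]`,
the set of runs `r ∈ C(h*)` on which, for every player `i`, `|f_i(r) - c_i| ≤ δ` and
`v̄_i(r^k) ≤ c_i + 2δ` for every `k ≥ n*`, has `P_{h*,σ*}`-probability more than `1 - δ`. -/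
theorem exists_good_subgame (G : StochGame)
    (P : G.History → G.Profile → Measure G.Run) (hP : IsInducedFamily G P)
    (hfm : ∀ i, Measurable (G.payoff i))
    (hf01 : ∀ (i : G.I) (r : G.Run), G.payoff i r ∈ Set.Icc (0 : ℝ) 1)
    (δ : ℝ) (hδ0 : 0 < δ) (hδ1 : δ < 1)
    (D : G.I → G.History → ℝ) (hD : ∀ i, IsMartinMinmax P δ i (D i))
    (σstar : G.Profile)
    (hσstar : ∀ h : G.History, Valid h → OneShotNash D h (fun j => σstar j h))
    (s : G.S) :
    ∃ (nstar : ℕ) (hstar : G.History), Valid hstar ∧ hstar.1 = s ∧ stage hstar = nstar ∧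
      ENNReal.ofReal (1 - δ) <
        P hstar σstar
          {r : G.Run | r ∈ cyl hstar ∧ ∀ i : G.I,
            |G.payoff i r - expPay P hstar σstar i| ≤ δ ∧
            ∀ k : ℕ, nstar ≤ k →
              minmaxVal P i (prefixRun r k) ≤ expPay P hstar σstar i + 2 * δ} :=
  exists_good_subgame' G P hP hfm hf01 δ hδ0 hδ1 D hD σstar hσstar s

end StochGame
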